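/- Let n ≥ 2 and let h : {1,…,n} → {1,…,n} be a Hessenberg function. If (k,ℓ) is a minimal negative Hessenberg pair, then w_{k,ℓ} is a maximal element of Ω_H. -/

import Mathlib

/-- The Bruhat order on S_n, via its combinatorial characterization:
u ≤ v iff |{a ∈ {1,…,i} : u(a) ≥ j}| ≤ |{a ∈ {1,…,i} : v(a) ≥ j}| for all i, j ∈ {1,…,n}.
Permutations are encoded on `Fin n` (position j ∈ {1,…,n} corresponds to `⟨j-1,_⟩`). -/
def BruhatLE {n : ℕ} (u v : Equiv.Perm (Fin n)) : Prop :=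
  ∀ i j : Fin n,
    (Finset.univ.filter (fun a : Fin n => a ≤ i ∧ j ≤ u a)).card ≤
    (Finset.univ.filter (fun a : Fin n => a ≤ i ∧ j ≤ v a)).card

/-- Strict Bruhat order: u < v iff u ≤ v and u ≠ v. -/
def BruhatLT {n : ℕ} (u v : Equiv.Perm (Fin n)) : Prop :=
  BruhatLE u v ∧ u ≠ v

/-- `IsWij i j w` says that w is the permutation w_{i,j}: w(i) = 1, w(j) = n, and the
values at the remaining positions, in increasing order of position, are n−1, n−2, …, 2
(equivalently: strictly decreasing); w_{i,j} is the longest permutation with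
w(i) = 1, w(j) = n. Encoded on `Fin n`: value v ∈ {1,…,n} corresponds to `⟨v-1,_⟩`. -/
def IsWij {n : ℕ} (i j : Fin n) (w : Equiv.Perm (Fin n)) : Prop :=
  (w i : ℕ) = 0 ∧ (w j : ℕ) = n - 1 ∧
    ∀ a b : Fin n, a < b → a ≠ i → a ≠ j → b ≠ i → b ≠ j → w b < w a

/-- (k,ℓ) is a negative Hessenberg pair for h: ℓ < k ≤ h(ℓ) (corresponding to the
negative Hessenberg root t_k − t_ℓ). Positions are encoded on `Fin n`
(position p ∈ {1,…,n} corresponds to `⟨p-1,_⟩`). -/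
def NegPair {n : ℕ} (h : ℕ → ℕ) (k l : Fin n) : Prop :=
  l < k ∧ (k : ℕ) + 1 ≤ h ((l : ℕ) + 1)

/-- A negative Hessenberg pair (k,ℓ) is minimal if there is no negative Hessenberg
pair (k',ℓ') ≠ (k,ℓ) with k ≤ k' and ℓ' ≤ ℓ. -/
def MinNegPair {n : ℕ} (h : ℕ → ℕ) (k l : Fin n) : Prop :=
  NegPair h k l ∧
    ∀ k' l' : Fin n, NegPair h k' l' → k ≤ k' → l' ≤ l → k' = k ∧ l' = l

/-- Membership in Ω_H = {w_{k,ℓ} : k < ℓ} ∪ {w_{k,ℓ} : (k,ℓ) a negative Hessenberg pair}. -/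
def InOmega {n : ℕ} (h : ℕ → ℕ) (u : Equiv.Perm (Fin n)) : Prop :=
  ∃ k l : Fin n, (k < l ∨ NegPair h k l) ∧ IsWij k l u

/-- m is a maximal element of Ω_H: m ∈ Ω_H and there is no u ∈ Ω_H with m < u
in the Bruhat order. -/
def MaxInOmega {n : ℕ} (h : ℕ → ℕ) (m : Equiv.Perm (Fin n)) : Prop :=
  InOmega h m ∧ ∀ u : Equiv.Perm (Fin n), InOmega h u → ¬ BruhatLT m u


open Finset in
lemma antiOn_not_lt {n : ℕ} (s : Finset (Fin n)) (f g : Fin n → Fin n)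
    (hf : ∀ a ∈ s, ∀ b ∈ s, a < b → f b < f a)
    (hg : ∀ a ∈ s, ∀ b ∈ s, a < b → g b < g a)
    (himg : s.image f = s.image g) :
    ∀ a ∈ s, ¬ f a < g a := by
  classical
  by_contra hcon
  push_neg at hcon
  obtain ⟨a, ha, hfa⟩ := hcon
  set T := s.filter (fun a => f a < g a) with hT
  have hne : T.Nonempty := ⟨a, by simp [hT, ha, hfa]⟩
  obtain ⟨m, hm, hmin⟩ := T.exists_min_image id hne
  have hms : m ∈ s := (mem_filter.mp hm).1
  have hfm : f m < g m := (mem_filter.mp hm).2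
  have hgm : g m ∈ s.image f := himg ▸ mem_image_of_mem g hms
  obtain ⟨c, hc, hfc⟩ := mem_image.mp hgm
  have hcm : c < m := by
    rcases lt_trichotomy c m with hx | hx | hx
    · exact hx
    · subst hx; exact absurd hfc (ne_of_lt hfm)
    · exact absurd hfc (ne_of_lt (lt_trans (hf m hms c hc hx) hfm))
  have hcT : c ∉ T := fun hcT => absurd (hmin c hcT) (not_le.mpr hcm)
  have hgc : ¬ f c < g c := fun hlt => hcT (mem_filter.mpr ⟨hc, hlt⟩)
  have h1 : g m < g c := hg c hc m hms hcm
  have h2 : g c ≤ g m := le_of_not_gt (fun hx => hgc (hfc ▸ hx))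
  exact lt_irrefl _ (lt_of_lt_of_le h1 h2)

open Finset in
lemma antiOn_eq {n : ℕ} (s : Finset (Fin n)) (f g : Fin n → Fin n)
    (hf : ∀ a ∈ s, ∀ b ∈ s, a < b → f b < f a)
    (hg : ∀ a ∈ s, ∀ b ∈ s, a < b → g b < g a)
    (himg : s.image f = s.image g) :
    ∀ a ∈ s, f a = g a := fun a ha =>
  le_antisymm (le_of_not_gt (antiOn_not_lt s g f hg hf himg.symm a ha))
    (le_of_not_gt (antiOn_not_lt s f g hf hg himg a ha))

open Finset in
lemma perm_image_erase {n : ℕ} (w : Equiv.Perm (Fin n)) (i j : Fin n) :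
    ((Finset.univ.erase i).erase j).image w
      = (Finset.univ.erase (w i)).erase (w j) := by
  ext x
  constructor
  · intro hx
    obtain ⟨a, ha, rfl⟩ := mem_image.mp hx
    obtain ⟨haj, ha2⟩ := mem_erase.mp ha
    obtain ⟨hai, -⟩ := mem_erase.mp ha2
    exact mem_erase.mpr ⟨fun hc => haj (w.injective hc),
      mem_erase.mpr ⟨fun hc => hai (w.injective hc), mem_univ _⟩⟩
  · intro hx
    obtain ⟨hxj, hx2⟩ := mem_erase.mp hx
    obtain ⟨hxi, -⟩ := mem_erase.mp hx2
    refine mem_image.mpr ⟨w⁻¹ x, ?_, w.apply_symm_apply x⟩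
    refine mem_erase.mpr ⟨?_, mem_erase.mpr ⟨?_, mem_univ _⟩⟩
    · intro hc; apply hxj
      rw [← hc]; exact (w.apply_symm_apply x).symm
    · intro hc; apply hxi
      rw [← hc]; exact (w.apply_symm_apply x).symm

open Finset in
lemma isWij_unique {n : ℕ} (i j : Fin n) (hij : i ≠ j)
    (w u : Equiv.Perm (Fin n)) (hw : IsWij i j w) (hu : IsWij i j u) : w = u := by
  obtain ⟨hwi, hwj, hwd⟩ := hw
  obtain ⟨hui, huj, hud⟩ := hu
  have hi : w i = u i := Fin.ext (by omega)
  have hj : w j = u j := Fin.ext (by omega)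
  have himg : ((Finset.univ.erase i).erase j).image (⇑w)
      = ((Finset.univ.erase i).erase j).image (⇑u) := by
    rw [perm_image_erase, perm_image_erase, hi, hj]
  have key := antiOn_eq ((Finset.univ.erase i).erase j) w u
    (fun a ha b hb hab => by
      simp only [mem_erase, mem_univ, and_true] at ha hb
      exact hwd a b hab ha.2 ha.1 hb.2 hb.1)
    (fun a ha b hb hab => by
      simp only [mem_erase, mem_univ, and_true] at ha hb
      exact hud a b hab ha.2 ha.1 hb.2 hb.1)
    himg
  apply Equiv.ext
  intro a
  by_cases hai : a = i
  · subst hai; exact hi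
  by_cases haj : a = j
  · subst haj; exact hj
  exact key a (by simp [hai, haj])

open Finset in
lemma bruhat_pos {n : ℕ} (hn : 2 ≤ n) {k l k' l' : Fin n}
    {w u : Equiv.Perm (Fin n)} (hw : IsWij k l w) (hu : IsWij k' l' u)
    (hle : BruhatLE w u) : k ≤ k' ∧ l' ≤ l := by
  obtain ⟨hwk, hwl, -⟩ := hw
  obtain ⟨huk, hul, -⟩ := hu
  have hwzero : ∀ a : Fin n, (w a : ℕ) = 0 ↔ a = k := by
    intro a
    constructor
    · intro hx
      apply w.injective
      exact Fin.ext (by omega)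
    · rintro rfl; exact hwk
  have huzero : ∀ a : Fin n, (u a : ℕ) = 0 ↔ a = k' := by
    intro a
    constructor
    · intro hx
      apply u.injective
      exact Fin.ext (by omega)
    · rintro rfl; exact huk
  have hwtop : ∀ a : Fin n, n - 1 ≤ (w a : ℕ) ↔ a = l := by
    intro a
    constructor
    · intro hx
      apply w.injective
      exact Fin.ext (by have := (w a).isLt; omega)
    · rintro rfl; omega
  have hutop : ∀ a : Fin n, n - 1 ≤ (u a : ℕ) ↔ a = l' := by
    intro a
    constructor
    · intro hx
      apply u.injective
      exact Fin.ext (by have := (u a).isLt; omega)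
    · rintro rfl; omega
  constructor
  · by_contra hx
    push_neg at hx
    have hone : (1 : ℕ) < n := hn
    set j1 : Fin n := ⟨1, hone⟩ with hj1
    have hcard := hle k' j1
    have hsub : (Finset.univ.filter (fun a : Fin n => a ≤ k' ∧ j1 ≤ u a))
        ⊂ (Finset.univ.filter (fun a : Fin n => a ≤ k' ∧ j1 ≤ w a)) := by
      constructor
      · intro a ha
        simp only [mem_filter, mem_univ, true_and] at ha ⊢
        obtain ⟨hak', -⟩ := ha
        refine ⟨hak', ?_⟩
        have hak : a ≠ k := by
          intro hc
          have h1 : (a : ℕ) ≤ (k' : ℕ) := hak'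
          have h2 : (k' : ℕ) < (k : ℕ) := hx
          have h3 := congrArg Fin.val hc
          omega
        have h0 : (w a : ℕ) ≠ 0 := fun hc => hak ((hwzero a).mp hc)
        exact Fin.le_def.mpr (show (1 : ℕ) ≤ (w a : ℕ) by omega)
      · intro hss
        have hk' : k' ∈ (Finset.univ.filter (fun a : Fin n => a ≤ k' ∧ j1 ≤ w a)) := by
          simp only [mem_filter, mem_univ, true_and]
          refine ⟨le_refl _, ?_⟩
          have hne : k' ≠ k := ne_of_lt hx
          have h0 : (w k' : ℕ) ≠ 0 := fun hc => hne ((hwzero k').mp hc)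
          exact Fin.le_def.mpr (show (1 : ℕ) ≤ (w k' : ℕ) by omega)
        have := hss hk'
        simp only [mem_filter, mem_univ, true_and] at this
        have h0 : (u k' : ℕ) = 0 := huk
        have : (1 : ℕ) ≤ (u k' : ℕ) := this.2
        omega
    exact absurd hcard (not_le.mpr (card_lt_card hsub))
  · by_contra hx
    push_neg at hx
    set j2 : Fin n := ⟨n - 1, by omega⟩ with hj2
    have hcard := hle l j2
    have hB : (Finset.univ.filter (fun a : Fin n => a ≤ l ∧ j2 ≤ u a)) = ∅ := by
      ext a
      simp only [mem_filter, mem_univ, true_and, notMem_empty, iff_false, not_and]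
      intro hal hua
      have : a = l' := (hutop a).mp hua
      subst this
      exact absurd (lt_of_le_of_lt hal hx) (lt_irrefl _)
    have hA : l ∈ (Finset.univ.filter (fun a : Fin n => a ≤ l ∧ j2 ≤ w a)) := by
      simp only [mem_filter, mem_univ, true_and]
      exact ⟨le_refl _, Fin.le_def.mpr (show n - 1 ≤ (w l : ℕ) by omega)⟩
    rw [hB] at hcard
    simp at hcard
    simp only [mem_filter, mem_univ, true_and] at hA
    exact absurd hA.2 (not_le.mpr (by apply hcard; exact hA.1))

/-- Let n ≥ 2 and h a Hessenberg function. If (k,ℓ) is a minimal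
negative Hessenberg pair, then w_{k,ℓ} is a maximal element of Ω_H. -/
theorem stmt_17 (n : ℕ) (hn : 2 ≤ n) (h : ℕ → ℕ)
    (hmono : ∀ i j, 1 ≤ i → i ≤ j → j ≤ n → h i ≤ h j)
    (hdom : ∀ j, 1 ≤ j → j ≤ n → j ≤ h j ∧ h j ≤ n)
    (k l : Fin n) (hmin : MinNegPair h k l)
    (w : Equiv.Perm (Fin n)) (hw : IsWij k l w) :
    MaxInOmega h w := by
  obtain ⟨hneg, hminim⟩ := hmin
  refine ⟨⟨k, l, Or.inr hneg, hw⟩, ?_⟩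
  rintro u ⟨k', l', hcase, hu⟩ ⟨hle, hne⟩
  obtain ⟨hkk', hll'⟩ := bruhat_pos hn hw hu hle
  rcases hcase with hlt | hneg'
  · exact absurd (lt_of_le_of_lt hkk' (lt_of_lt_of_le hlt hll')) (not_lt.mpr hneg.1.le)
  · obtain ⟨hk, hl⟩ := hminim k' l' hneg' hkk' hll'
    subst hk; subst hl
    exact hne (isWij_unique k' l' hneg.1.ne' w u hw hu)
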